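/- Products of companion matrices vanish under a summed-norm condition (Lemma 2 of the paper): let n, p ≥ 1 and ϱ ∈ [0, 1/p). For each l ∈ ℕ, let A_{l,1}, …, A_{l,p} be n×n real matrices with ∑_{j=1}^{p} ‖A_{l,j}‖ ≤ ϱ, and let 𝒜_l be the (np) × (np) companion block matrix whose first block row is (A_{l,1}, A_{l,2}, …, A_{l,p}), whose (i+1, i)-th n×n blocks are identity matrices for i = 1, …, p−1, and whose remaining blocks are zero. Then ‖𝒜₁·𝒜₂···𝒜_k‖ ≤ (1+ϱ)^{p−1}·(p·ϱ)^{⌊k/p⌋} for all k, and in particular ‖𝒜₁·𝒜₂···𝒜_k‖ → 0 as k → ∞. -/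

import Mathlib

open Matrix

/-- The ℓ²-operator (spectral) norm of a square real matrix, i.e. the operator
norm of the induced map between Euclidean spaces. -/
noncomputable def l2OpNorm {m : Type*} [Fintype m] [DecidableEq m]
    (M : Matrix m m ℝ) : ℝ :=
  ‖Matrix.toEuclideanCLM (𝕜 := ℝ) M‖

/-- The `(np) × (np)` companion block matrix with first block row
`(A 0, A 1, …, A (p-1))` and identity `n × n` blocks on the first block
subdiagonal. -/
def companionBlock {n p : ℕ} (A : Fin p → Matrix (Fin n) (Fin n) ℝ) :
    Matrix (Fin p × Fin n) (Fin p × Fin n) ℝ :=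
  fun ia jb =>
    if (ia.1 : ℕ) = 0 then A jb.1 ia.2 jb.2
    else if (ia.1 : ℕ) = (jb.1 : ℕ) + 1 ∧ ia.2 = jb.2 then 1 else 0

namespace CompanionAux

open scoped Matrix.Norms.L2Operator

variable {n p : ℕ}

/-- Extract the `(i,j)` block of a big matrix. -/
def blk (M : Matrix (Fin p × Fin n) (Fin p × Fin n) ℝ) (i j : Fin p) :
    Matrix (Fin n) (Fin n) ℝ := fun a b => M (i, a) (j, b)

/-- Embed a small matrix as the `(i,j)` block. -/
def embd (i j : Fin p) (B : Matrix (Fin n) (Fin n) ℝ) :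
    Matrix (Fin p × Fin n) (Fin p × Fin n) ℝ :=
  fun ia jb => if ia.1 = i ∧ jb.1 = j then B ia.2 jb.2 else 0

lemma l2norm_one_le {m : Type*} [Fintype m] [DecidableEq m] :
    ‖(1 : Matrix m m ℝ)‖ ≤ 1 := by
  rw [Matrix.cstar_norm_def, _root_.map_one]
  exact ContinuousLinearMap.norm_id_le

lemma opNorm_le_bound {m m' : Type*} [Fintype m] [Fintype m'] [DecidableEq m']
    (M : Matrix m m' ℝ) {c : ℝ} (hc : 0 ≤ c)
    (h : ∀ x : EuclideanSpace ℝ m',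
      ‖(WithLp.equiv 2 (m → ℝ)).symm (M *ᵥ (WithLp.equiv 2 (m' → ℝ) x))‖ ≤ c * ‖x‖) :
    ‖M‖ ≤ c := by
  rw [Matrix.l2_opNorm_def]
  exact ContinuousLinearMap.opNorm_le_bound _ hc fun x => h x

lemma norm_embd_le (i j : Fin p) (B : Matrix (Fin n) (Fin n) ℝ) :
    ‖embd i j B‖ ≤ ‖B‖ := by
  refine opNorm_le_bound _ (norm_nonneg B) fun x => ?_
  set xj : EuclideanSpace ℝ (Fin n) := (WithLp.equiv 2 (Fin n → ℝ)).symm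
      (fun b => x (j, b)) with hxj
  have hv : ∀ q : Fin p × Fin n,
      (embd i j B *ᵥ (WithLp.equiv 2 (Fin p × Fin n → ℝ) x)) q
        = if q.1 = i then (B *ᵥ fun b => x (j, b)) q.2 else 0 := by
    rintro ⟨i', a⟩
    simp only [Matrix.mulVec, dotProduct, embd]
    by_cases h : i' = i
    · subst h
      rw [if_pos rfl, Fintype.sum_prod_type]
      rw [Finset.sum_eq_single j]
      · simp [Matrix.mulVec, dotProduct]
      · intro j' _ hj'
        apply Finset.sum_eq_zero
        intro b _
        simp [hj']
      · simp
    · rw [if_neg h]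
      apply Finset.sum_eq_zero
      rintro ⟨j', b⟩ _
      simp [h]
  have hnv : ‖(WithLp.equiv 2 (Fin p × Fin n → ℝ)).symm
        (embd i j B *ᵥ (WithLp.equiv 2 (Fin p × Fin n → ℝ) x))‖
      = ‖(WithLp.equiv 2 (Fin n → ℝ)).symm (B *ᵥ fun b => x (j, b))‖ := by
    rw [EuclideanSpace.norm_eq, EuclideanSpace.norm_eq]
    congr 1
    simp only [WithLp.equiv_symm_apply, WithLp.ofLp_toLp]
    rw [Fintype.sum_prod_type]
    rw [Finset.sum_eq_single i]
    · apply Finset.sum_congr rfl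
      intro a _
      rw [hv (i, a)]
      rw [if_pos rfl]
    · intro i' _ hi'
      apply Finset.sum_eq_zero
      intro a _
      rw [hv (i', a), if_neg hi']
      simp
    · simp
  rw [hnv]
  refine (Matrix.l2_opNorm_mulVec B xj).trans ?_
  apply mul_le_mul_of_nonneg_left _ (norm_nonneg B)
  rw [EuclideanSpace.norm_eq, EuclideanSpace.norm_eq]
  apply Real.sqrt_le_sqrt
  rw [Fintype.sum_prod_type]
  calc ∑ b, ‖xj b‖ ^ 2 = ∑ b, ‖x (j, b)‖ ^ 2 := rfl
    _ ≤ ∑ j' : Fin p, ∑ b, ‖x (j', b)‖ ^ 2 := by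
        refine Finset.single_le_sum (f := fun j' => ∑ b, ‖x (j', b)‖ ^ 2) ?_ (Finset.mem_univ j)
        intro j' _
        positivity

lemma norm_shift_le :
    ‖companionBlock (fun _ => (0 : Matrix (Fin n) (Fin n) ℝ)) (p := p)‖ ≤ 1 := by
  refine opNorm_le_bound _ zero_le_one fun x => ?_
  rw [one_mul]
  set E := companionBlock (fun _ => (0 : Matrix (Fin n) (Fin n) ℝ)) (p := p) with hE
  have hv : ∀ q : Fin p × Fin n,
      (E *ᵥ (WithLp.equiv 2 (Fin p × Fin n → ℝ) x)) q
        = if h : (q.1 : ℕ) = 0 then 0 else x (⟨(q.1 : ℕ) - 1, by omega⟩, q.2) := by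
    rintro ⟨i, a⟩
    by_cases h : (i : ℕ) = 0
    · rw [dif_pos h]
      apply Finset.sum_eq_zero
      rintro ⟨j, b⟩ _
      simp [hE, companionBlock, h]
    · rw [dif_neg h]
      have hi1 : (i : ℕ) - 1 < p := by omega
      rw [show (E *ᵥ (WithLp.equiv 2 (Fin p × Fin n → ℝ) x)) (i, a)
          = ∑ q : Fin p × Fin n, E (i, a) q * x q from rfl]
      rw [Finset.sum_eq_single ((⟨(i : ℕ) - 1, hi1⟩ : Fin p), a)]
      · have : E (i, a) (⟨(i : ℕ) - 1, hi1⟩, a) = 1 := by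
          simp only [hE, companionBlock, if_neg h]
          rw [if_pos ⟨by omega, trivial⟩]
        rw [this, one_mul]
      · rintro ⟨j, b⟩ _ hne
        have : E (i, a) (j, b) = 0 := by
          simp only [hE, companionBlock, if_neg h]
          rw [if_neg]
          rintro ⟨h1, h2⟩
          apply hne
          subst h2
          congr 1
          apply Fin.ext
          simp
          omega
        rw [this, zero_mul]
      · simp
  rw [EuclideanSpace.norm_eq, EuclideanSpace.norm_eq]
  apply Real.sqrt_le_sqrt
  simp only [WithLp.equiv_symm_apply, WithLp.ofLp_toLp]
  calc ∑ q : Fin p × Fin n, ‖(E *ᵥ (WithLp.equiv 2 (Fin p × Fin n → ℝ) x)) q‖ ^ 2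
      = ∑ q ∈ Finset.univ.filter (fun q : Fin p × Fin n => (q.1 : ℕ) ≠ 0),
          ‖x (⟨(q.1 : ℕ) - 1, by omega⟩, q.2)‖ ^ 2 := by
        rw [Finset.sum_filter]
        apply Finset.sum_congr rfl
        intro q _
        rw [hv q]
        by_cases h : (q.1 : ℕ) = 0
        · simp [h]
        · simp [h]
    _ = ∑ q ∈ (Finset.univ.filter (fun q : Fin p × Fin n => (q.1 : ℕ) ≠ 0)).image
          (fun q : Fin p × Fin n => ((⟨(q.1 : ℕ) - 1, by omega⟩ : Fin p), q.2)),
          ‖x q‖ ^ 2 := by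
        rw [Finset.sum_image]
        rintro ⟨i, a⟩ hi ⟨j, b⟩ hj hij
        simp only [Finset.mem_coe, Finset.mem_filter, Finset.mem_univ, true_and] at hi hj
        simp only [Prod.mk.injEq, Fin.mk.injEq] at hij
        obtain ⟨h1, h2⟩ := hij
        subst h2
        congr 1
        apply Fin.ext
        omega
    _ ≤ ∑ q : Fin p × Fin n, ‖x q‖ ^ 2 := by
        apply Finset.sum_le_sum_of_subset_of_nonneg (Finset.subset_univ _)
        intro q _ _
        positivity

lemma blk_mul (M N : Matrix (Fin p × Fin n) (Fin p × Fin n) ℝ) (i j : Fin p) :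
    blk (M * N) i j = ∑ m : Fin p, blk M i m * blk N m j := by
  ext a b
  rw [Matrix.sum_apply]
  simp only [blk, Matrix.mul_apply]
  rw [Fintype.sum_prod_type]

lemma blk_one (i j : Fin p) :
    blk (1 : Matrix (Fin p × Fin n) (Fin p × Fin n) ℝ) i j
      = if i = j then (1 : Matrix (Fin n) (Fin n) ℝ) else 0 := by
  ext a b
  by_cases h : i = j
  · subst h
    simp [blk, Matrix.one_apply, Prod.ext_iff]
  · simp [blk, Matrix.one_apply, Prod.ext_iff, h]

lemma blk_companion (A : Fin p → Matrix (Fin n) (Fin n) ℝ) (i j : Fin p) :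
    blk (companionBlock A) i j
      = if (i : ℕ) = 0 then A j
        else if (i : ℕ) = (j : ℕ) + 1 then (1 : Matrix (Fin n) (Fin n) ℝ) else 0 := by
  ext a b
  by_cases h : (i : ℕ) = 0
  · simp [blk, companionBlock, h]
  · by_cases h2 : (i : ℕ) = (j : ℕ) + 1
    · simp [blk, companionBlock, h, h2, Matrix.one_apply]
    · simp [blk, companionBlock, h, h2]

lemma companion_decomp (hp : 0 < p) (A : Fin p → Matrix (Fin n) (Fin n) ℝ) :
    companionBlock A
      = companionBlock (fun _ => (0 : Matrix (Fin n) (Fin n) ℝ))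
        + ∑ j : Fin p, embd (⟨0, hp⟩ : Fin p) j (A j) := by
  ext ⟨i, a⟩ ⟨j, b⟩
  rw [Matrix.add_apply, Matrix.sum_apply]
  by_cases h : (i : ℕ) = 0
  · have hi : i = ⟨0, hp⟩ := Fin.ext h
    subst hi
    simp only [companionBlock, embd, h, if_pos rfl]
    rw [Finset.sum_eq_single j]
    · simp
    · intro j' _ hj'
      simp [hj'.symm]
    · simp
  · have hi : i ≠ ⟨0, hp⟩ := by
      intro hc; apply h; rw [hc]
    simp only [companionBlock, embd, if_neg h]
    rw [Finset.sum_eq_zero, add_zero]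
    intro j' _
    simp [hi]

lemma norm_le_sum_blk (M : Matrix (Fin p × Fin n) (Fin p × Fin n) ℝ) :
    ‖M‖ ≤ ∑ i : Fin p, ∑ j : Fin p, ‖blk M i j‖ := by
  have hM : M = ∑ i : Fin p, ∑ j : Fin p, embd i j (blk M i j) := by
    ext ⟨i, a⟩ ⟨j, b⟩
    rw [Matrix.sum_apply]
    rw [Finset.sum_eq_single i]
    · rw [Matrix.sum_apply]
      rw [Finset.sum_eq_single j]
      · simp [embd, blk]
      · intro j' _ hj'
        simp [embd, hj'.symm]
      · simp
    · intro i' _ hi'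
      rw [Matrix.sum_apply]
      apply Finset.sum_eq_zero
      intro j' _
      simp [embd, hi'.symm]
    · simp
  calc ‖M‖ = ‖∑ i : Fin p, ∑ j : Fin p, embd i j (blk M i j)‖ := by rw [← hM]
    _ ≤ ∑ i : Fin p, ‖∑ j : Fin p, embd i j (blk M i j)‖ := norm_sum_le _ _
    _ ≤ ∑ i : Fin p, ∑ j : Fin p, ‖embd i j (blk M i j)‖ :=
        Finset.sum_le_sum fun i _ => norm_sum_le _ _
    _ ≤ ∑ i : Fin p, ∑ j : Fin p, ‖blk M i j‖ := by
        apply Finset.sum_le_sum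
        intro i _
        apply Finset.sum_le_sum
        intro j _
        exact norm_embd_le i j _

lemma norm_companion_le (hp : 0 < p) (A : Fin p → Matrix (Fin n) (Fin n) ℝ) :
    ‖companionBlock A‖ ≤ 1 + ∑ j : Fin p, ‖A j‖ := by
  rw [companion_decomp hp A]
  refine (norm_add_le _ _).trans (add_le_add norm_shift_le ?_)
  refine (norm_sum_le _ _).trans (Finset.sum_le_sum fun j _ => norm_embd_le _ j _)

lemma prod_split (f : ℕ → Matrix (Fin p × Fin n) (Fin p × Fin n) ℝ) (t : ℕ) :
    ((List.range (t + 1)).map f).prod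
      = f 0 * ((List.range t).map (fun l => f (l + 1))).prod := by
  rw [List.range_succ_eq_map]
  simp [List.map_map, Function.comp_def]

lemma prod_add (f : ℕ → Matrix (Fin p × Fin n) (Fin p × Fin n) ℝ) (s t : ℕ) :
    ((List.range (s + t)).map f).prod
      = ((List.range s).map f).prod * ((List.range t).map (fun l => f (s + l))).prod := by
  rw [List.range_add]
  simp [List.map_map, Function.comp_def]

lemma sum_ite_row (m : Fin p) (t : ℕ) :
    ∑ j : Fin p,
      ‖if (m : ℕ) = (j : ℕ) + t then (1 : Matrix (Fin n) (Fin n) ℝ) else 0‖ ≤ 1 := by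
  by_cases h : ∃ j : Fin p, (m : ℕ) = (j : ℕ) + t
  · obtain ⟨j0, hj0⟩ := h
    rw [Finset.sum_eq_single j0]
    · rw [if_pos hj0]
      exact l2norm_one_le
    · intro j' _ hj'
      rw [if_neg, norm_zero]
      intro hc
      exact hj' (Fin.ext (by omega))
    · simp
  · push_neg at h
    rw [Finset.sum_eq_zero]
    · exact zero_le_one
    intro j _
    rw [if_neg (h j), norm_zero]

lemma blk_companion_mul_ne (A : Fin p → Matrix (Fin n) (Fin n) ℝ)
    (Q : Matrix (Fin p × Fin n) (Fin p × Fin n) ℝ) {i : Fin p} (h0 : (i : ℕ) ≠ 0)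
    (j : Fin p) :
    blk (companionBlock A * Q) i j
      = blk Q ⟨(i : ℕ) - 1, lt_of_le_of_lt (Nat.sub_le _ _) i.isLt⟩ j := by
  rw [blk_mul]
  rw [Finset.sum_eq_single (⟨(i : ℕ) - 1, lt_of_le_of_lt (Nat.sub_le _ _) i.isLt⟩ : Fin p)]
  · rw [blk_companion, if_neg h0, if_pos (by simp; omega), one_mul]
  · intro m _ hm
    rw [blk_companion, if_neg h0, if_neg, zero_mul]
    intro hc
    exact hm (Fin.ext (by simp; omega))
  · simp

lemma blk_companion_mul_zero (A : Fin p → Matrix (Fin n) (Fin n) ℝ)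
    (Q : Matrix (Fin p × Fin n) (Fin p × Fin n) ℝ) {i : Fin p} (h0 : (i : ℕ) = 0)
    (j : Fin p) :
    blk (companionBlock A * Q) i j = ∑ m : Fin p, A m * blk Q m j := by
  rw [blk_mul]
  apply Finset.sum_congr rfl
  intro m _
  rw [blk_companion, if_pos h0]

/-- The main structural induction: the product of `t ≤ p` companion matrices has
row block-norm sums at most `ϱ` in rows below `t`, and shifted identity blocks in
the other rows. -/
lemma struct {ϱ : ℝ} (hϱ0 : 0 ≤ ϱ) (hϱ1 : ϱ ≤ 1) :
    ∀ t : ℕ, t ≤ p → ∀ B : ℕ → Fin p → Matrix (Fin n) (Fin n) ℝ,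
      (∀ l : ℕ, ∑ j : Fin p, ‖B l j‖ ≤ ϱ) →
      (∀ i : Fin p, (i : ℕ) < t →
        ∑ j : Fin p,
          ‖blk (((List.range t).map (fun l => companionBlock (B l))).prod) i j‖ ≤ ϱ) ∧
      (∀ i j : Fin p, t ≤ (i : ℕ) →
        blk (((List.range t).map (fun l => companionBlock (B l))).prod) i j
          = if (i : ℕ) = (j : ℕ) + t then 1 else 0) := by
  intro t
  induction t with
  | zero =>
    intro _ B _
    constructor
    · intro i hi
      exact absurd hi (Nat.not_lt_zero _)
    · intro i j _
      simp only [List.range_zero, List.map_nil, List.prod_nil]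
      rw [blk_one]
      by_cases h : i = j
      · subst h
        rw [if_pos rfl, if_pos (by omega)]
      · rw [if_neg h, if_neg (by intro hc; exact h (Fin.ext (by omega)))]
  | succ t ih =>
    intro ht B hB
    have hQ := ih (by omega) (fun l => B (l + 1)) (fun l => hB (l + 1))
    set Q := ((List.range t).map (fun l => companionBlock (B (l + 1)))).prod with hQdef
    have hsplit : ((List.range (t + 1)).map (fun l => companionBlock (B l))).prod
        = companionBlock (B 0) * Q := prod_split _ t
    constructor
    · intro i hi
      rw [hsplit]
      by_cases h0 : (i : ℕ) = 0
      · calc ∑ j : Fin p, ‖blk (companionBlock (B 0) * Q) i j‖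
            = ∑ j : Fin p, ‖∑ m : Fin p, B 0 m * blk Q m j‖ := by
              apply Finset.sum_congr rfl
              intro j _
              rw [blk_companion_mul_zero _ _ h0]
          _ ≤ ∑ j : Fin p, ∑ m : Fin p, ‖B 0 m * blk Q m j‖ :=
              Finset.sum_le_sum fun j _ => norm_sum_le _ _
          _ ≤ ∑ j : Fin p, ∑ m : Fin p, ‖B 0 m‖ * ‖blk Q m j‖ :=
              Finset.sum_le_sum fun j _ => Finset.sum_le_sum fun m _ => norm_mul_le _ _
          _ = ∑ m : Fin p, ‖B 0 m‖ * ∑ j : Fin p, ‖blk Q m j‖ := by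
              rw [Finset.sum_comm]
              apply Finset.sum_congr rfl
              intro m _
              rw [Finset.mul_sum]
          _ ≤ ∑ m : Fin p, ‖B 0 m‖ * 1 := by
              apply Finset.sum_le_sum
              intro m _
              apply mul_le_mul_of_nonneg_left _ (norm_nonneg _)
              by_cases hm : (m : ℕ) < t
              · exact (hQ.1 m hm).trans hϱ1
              · calc ∑ j : Fin p, ‖blk Q m j‖
                    = ∑ j : Fin p, ‖if (m : ℕ) = (j : ℕ) + t
                        then (1 : Matrix (Fin n) (Fin n) ℝ) else 0‖ := by
                      apply Finset.sum_congr rfl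
                      intro j _
                      rw [hQ.2 m j (by omega)]
                  _ ≤ 1 := sum_ite_row m t
          _ ≤ ϱ := by
              simp only [mul_one]
              exact hB 0
      · have hlt : ((⟨(i : ℕ) - 1, lt_of_le_of_lt (Nat.sub_le _ _) i.isLt⟩ : Fin p) : ℕ) < t := by
          simp
          omega
        calc ∑ j : Fin p, ‖blk (companionBlock (B 0) * Q) i j‖
            = ∑ j : Fin p, ‖blk Q ⟨(i : ℕ) - 1, lt_of_le_of_lt (Nat.sub_le _ _) i.isLt⟩ j‖ := by
              apply Finset.sum_congr rfl
              intro j _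
              rw [blk_companion_mul_ne _ _ h0]
          _ ≤ ϱ := hQ.1 _ hlt
    · intro i j hti
      have h0 : (i : ℕ) ≠ 0 := by omega
      rw [hsplit, blk_companion_mul_ne _ _ h0,
        hQ.2 _ j (by show t ≤ (i : ℕ) - 1; omega)]
      by_cases h : (i : ℕ) = (j : ℕ) + (t + 1)
      · rw [if_pos (by simp; omega), if_pos h]
      · rw [if_neg (by simp; omega), if_neg h]

lemma norm_prod_p (hp : 0 < p) {ϱ : ℝ} (hϱ0 : 0 ≤ ϱ) (hϱ1 : ϱ ≤ 1)
    (B : ℕ → Fin p → Matrix (Fin n) (Fin n) ℝ)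
    (hB : ∀ l : ℕ, ∑ j : Fin p, ‖B l j‖ ≤ ϱ) :
    ‖((List.range p).map (fun l => companionBlock (B l))).prod‖ ≤ (p : ℝ) * ϱ := by
  refine (norm_le_sum_blk _).trans ?_
  calc ∑ i : Fin p, ∑ j : Fin p,
        ‖blk (((List.range p).map (fun l => companionBlock (B l))).prod) i j‖
      ≤ ∑ _i : Fin p, ϱ :=
        Finset.sum_le_sum fun i _ => (struct hϱ0 hϱ1 p le_rfl B hB).1 i i.isLt
    _ = (p : ℝ) * ϱ := by
        rw [Finset.sum_const, Finset.card_univ, Fintype.card_fin, nsmul_eq_mul]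

lemma norm_prod_le_pow (hp : 0 < p) {ϱ : ℝ} (hϱ0 : 0 ≤ ϱ) :
    ∀ k : ℕ, ∀ B : ℕ → Fin p → Matrix (Fin n) (Fin n) ℝ,
      (∀ l : ℕ, ∑ j : Fin p, ‖B l j‖ ≤ ϱ) →
      ‖((List.range k).map (fun l => companionBlock (B l))).prod‖ ≤ (1 + ϱ) ^ k := by
  intro k
  induction k with
  | zero =>
    intro B _
    simpa using l2norm_one_le
  | succ k ih =>
    intro B hB
    rw [prod_split, pow_succ, mul_comm ((1 + ϱ) ^ k)]
    refine (norm_mul_le _ _).trans ?_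
    apply mul_le_mul _ (ih (fun l => B (l + 1)) (fun l => hB (l + 1))) (norm_nonneg _)
      (by positivity)
    exact (norm_companion_le hp _).trans (by linarith [hB 0])

lemma main_bound (hp : 0 < p) {ϱ : ℝ} (hϱ0 : 0 ≤ ϱ) (hϱ1 : ϱ ≤ 1) :
    ∀ k : ℕ, ∀ B : ℕ → Fin p → Matrix (Fin n) (Fin n) ℝ,
      (∀ l : ℕ, ∑ j : Fin p, ‖B l j‖ ≤ ϱ) →
      ‖((List.range k).map (fun l => companionBlock (B l))).prod‖
        ≤ (1 + ϱ) ^ (p - 1) * ((p : ℝ) * ϱ) ^ (k / p) := by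
  intro k
  induction k using Nat.strong_induction_on with
  | _ k ihk =>
    intro B hB
    by_cases hk : k < p
    · have h1 : k / p = 0 := Nat.div_eq_of_lt hk
      rw [h1, pow_zero, mul_one]
      refine (norm_prod_le_pow hp hϱ0 k B hB).trans ?_
      exact pow_le_pow_right₀ (by linarith) (by omega)
    · push_neg at hk
      obtain ⟨m, rfl⟩ : ∃ m, k = p + m := ⟨k - p, by omega⟩
      rw [prod_add]
      refine (norm_mul_le _ _).trans ?_
      have h2 : (p + m) / p = m / p + 1 := by
        rw [add_comm]
        exact Nat.add_div_right m hp
      have h3 := ihk m (by omega) (fun l => B (p + l)) (fun l => hB (p + l))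
      have h4 := norm_prod_p hp hϱ0 hϱ1 B hB
      calc ‖((List.range p).map (fun l => companionBlock (B l))).prod‖ *
            ‖((List.range m).map (fun l => companionBlock (B (p + l)))).prod‖
          ≤ ((p : ℝ) * ϱ) * ((1 + ϱ) ^ (p - 1) * ((p : ℝ) * ϱ) ^ (m / p)) := by
            apply mul_le_mul h4 h3 (norm_nonneg _) (by positivity)
        _ = (1 + ϱ) ^ (p - 1) * ((p : ℝ) * ϱ) ^ ((p + m) / p) := by
            rw [h2, pow_succ]
            ring

end CompanionAux

/-- Products of companion matrices vanish under a summed-norm condition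
(Lemma 2 of the paper). -/
theorem companion_products_vanish (n p : ℕ) (hn : 1 ≤ n) (hp : 1 ≤ p)
    (ϱ : ℝ) (hϱ0 : 0 ≤ ϱ) (hϱ1 : ϱ < 1 / p)
    (A : ℕ → Fin p → Matrix (Fin n) (Fin n) ℝ)
    (hA : ∀ l : ℕ, ∑ j : Fin p, l2OpNorm (A l j) ≤ ϱ) :
    (∀ k : ℕ,
      l2OpNorm (((List.range k).map (fun l => companionBlock (A (l + 1)))).prod)
        ≤ (1 + ϱ) ^ (p - 1) * ((p : ℝ) * ϱ) ^ (k / p)) ∧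
    Filter.Tendsto
      (fun k : ℕ =>
        l2OpNorm (((List.range k).map (fun l => companionBlock (A (l + 1)))).prod))
      Filter.atTop (nhds 0) := by
  open scoped Matrix.Norms.L2Operator in
  have hpR : (0 : ℝ) < p := by exact_mod_cast hp
  have hϱle1 : ϱ ≤ 1 := by
    have : (1 : ℝ) / p ≤ 1 := by
      rw [div_le_one hpR]
      exact_mod_cast hp
    linarith
  have hnorm : ∀ M : Matrix (Fin p × Fin n) (Fin p × Fin n) ℝ, l2OpNorm M = ‖M‖ :=
    fun M => rfl
  have hnorm' : ∀ M : Matrix (Fin n) (Fin n) ℝ, l2OpNorm M = ‖M‖ := fun M => rfl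
  have hB : ∀ l : ℕ, ∑ j : Fin p, ‖A (l + 1) j‖ ≤ ϱ := by
    intro l
    have := hA (l + 1)
    simpa [hnorm'] using this
  have hmain := CompanionAux.main_bound (n := n) hp hϱ0 hϱle1
  have part1 : ∀ k : ℕ,
      l2OpNorm (((List.range k).map (fun l => companionBlock (A (l + 1)))).prod)
        ≤ (1 + ϱ) ^ (p - 1) * ((p : ℝ) * ϱ) ^ (k / p) := by
    intro k
    rw [hnorm]
    exact hmain k (fun l => A (l + 1)) hB
  refine ⟨part1, ?_⟩
  have hr0 : (0 : ℝ) ≤ (p : ℝ) * ϱ := by positivity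
  have hr1 : (p : ℝ) * ϱ < 1 := by
    have := (lt_div_iff₀ hpR).mp hϱ1
    linarith [this]
  have hdiv : Filter.Tendsto (fun k : ℕ => k / p) Filter.atTop Filter.atTop := by
    apply Filter.tendsto_atTop_atTop_of_monotone
    · intro a b hab
      exact Nat.div_le_div_right hab
    · intro b
      exact ⟨b * p, le_of_eq (Nat.mul_div_cancel b hp).symm⟩
  have htend : Filter.Tendsto
      (fun k : ℕ => (1 + ϱ) ^ (p - 1) * ((p : ℝ) * ϱ) ^ (k / p))
      Filter.atTop (nhds 0) := by
    have h1 : Filter.Tendsto (fun k : ℕ => ((p : ℝ) * ϱ) ^ (k / p))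
        Filter.atTop (nhds 0) :=
      (tendsto_pow_atTop_nhds_zero_of_lt_one hr0 hr1).comp hdiv
    simpa using h1.const_mul ((1 + ϱ) ^ (p - 1))
  refine squeeze_zero (fun k => ?_) part1 htend
  rw [hnorm]
  exact norm_nonneg _
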